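/- Let (F : C → D, U : D → C) be a comonoidal adjunction between monoidal categories (i.e., F and U are comonoidal functors and the unit and counit are comonoidal natural transformations). Then the comonoidal structure morphisms U_2(X,Y) : U(X ⊗ Y) → U(X) ⊗ U(Y) and U_0 : U(𝟙) → 𝟙 are isomorphisms; i.e., U is a strong (co)monoidal functor. -/

import Mathlib

open CategoryTheory MonoidalCategory Functor.OplaxMonoidal

/-- Let `(F : C → D, U : D → C)` be a comonoidal adjunction between monoidal
categories, i.e. `F` and `U` are comonoidal (oplax monoidal) functors and the unit
and counit of the adjunction are comonoidal natural transformations. Then the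
comonoidal structure morphisms `U₂(X,Y) : U(X ⊗ Y) → U(X) ⊗ U(Y)` and
`U₀ : U(𝟙) → 𝟙` are isomorphisms, i.e. `U` is a strong (co)monoidal functor. -/
theorem right_adjoint_of_comonoidal_adjunction_is_strong
    {C D : Type*} [Category C] [Category D] [MonoidalCategory C] [MonoidalCategory D]
    (F : C ⥤ D) (U : D ⥤ C) [F.OplaxMonoidal] [U.OplaxMonoidal] (adj : F ⊣ U)
    (unit_tensor : ∀ X Y : C,
      adj.unit.app (X ⊗ Y) ≫ U.map (δ F X Y) ≫ δ U (F.obj X) (F.obj Y) =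
        adj.unit.app X ⊗ₘ adj.unit.app Y)
    (unit_unit : adj.unit.app (𝟙_ C) ≫ U.map (η F) ≫ η U = 𝟙 (𝟙_ C))
    (counit_tensor : ∀ X Y : D,
      adj.counit.app (X ⊗ Y) =
        F.map (δ U X Y) ≫ δ F (U.obj X) (U.obj Y) ≫
          (adj.counit.app X ⊗ₘ adj.counit.app Y))
    (counit_unit : adj.counit.app (𝟙_ D) = F.map (η U) ≫ η F) :
    IsIso (η U) ∧ ∀ X Y : D, IsIso (δ U X Y) := by
  constructor
  · refine ⟨⟨adj.unit.app (𝟙_ C) ≫ U.map (η F), ?_, ?_⟩⟩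
    · have h := adj.unit.naturality (η U)
      dsimp at h
      rw [← Category.assoc, h, Category.assoc, ← U.map_comp, ← counit_unit,
        adj.right_triangle_components]
    · simp only [Category.assoc]; exact unit_unit
  · intro X Y
    refine ⟨⟨adj.unit.app (U.obj X ⊗ U.obj Y) ≫ U.map (δ F _ _) ≫
      U.map (adj.counit.app X ⊗ₘ adj.counit.app Y), ?_, ?_⟩⟩
    · have h := adj.unit.naturality (δ U X Y)
      dsimp at h
      rw [← Category.assoc, ← Category.assoc, h, Category.assoc, Category.assoc,
        ← U.map_comp, ← U.map_comp, ← counit_tensor,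
        adj.right_triangle_components]
    · have hnat : U.map (adj.counit.app X ⊗ₘ adj.counit.app Y) ≫ δ U X Y =
          δ U (F.obj (U.obj X)) (F.obj (U.obj Y)) ≫
            (U.map (adj.counit.app X) ⊗ₘ U.map (adj.counit.app Y)) := by
        simpa using (Functor.OplaxMonoidal.δ_natural U
          (adj.counit.app X) (adj.counit.app Y)).symm
      have ht : adj.unit.app (U.obj X ⊗ U.obj Y) ≫ U.map (δ F (U.obj X) (U.obj Y)) ≫
          δ U (F.obj (U.obj X)) (F.obj (U.obj Y)) ≫
            (U.map (adj.counit.app X) ⊗ₘ U.map (adj.counit.app Y)) =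
          (adj.unit.app (U.obj X) ⊗ₘ adj.unit.app (U.obj Y)) ≫
            (U.map (adj.counit.app X) ⊗ₘ U.map (adj.counit.app Y)) := by
        rw [← unit_tensor (U.obj X) (U.obj Y)]
        simp
      rw [Category.assoc, Category.assoc, hnat, ht, tensorHom_comp_tensorHom,
        adj.right_triangle_components, adj.right_triangle_components]
      simp
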